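/- Let n ≥ 3. Every D ∈ Γ_K with D·H > 0 is a linear combination with nonnegative integer coefficients of the simple roots l_0, l_1, …, l_{n−1}, and every D ∈ Γ_K with D·H = 0 equals E_i − E_j for some i ≠ j. In particular, for every normalized reduced class ω = (1 | m_1, …, m_n) and every D ∈ Γ_K with D·H > 0 one has ω·D ≥ 0. (Lemma 2.17(i).) -/

import Mathlib

open Finset

noncomputable section

/-- The intersection pairing on ℝ^{1,n}: coordinate `0` is the coefficient of `H`,
coordinate `i.succ` is the coefficient of `E_{i+1}`.  `H·H = 1`, `E_i·E_i = -1`,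
distinct basis vectors are orthogonal. -/
def ip (n : ℕ) (x y : Fin (n + 1) → ℝ) : ℝ :=
  x 0 * y 0 - ∑ i : Fin n, x i.succ * y i.succ

/-- The canonical class `K = -3H + E_1 + ⋯ + E_n`. -/
def Kc (n : ℕ) : Fin (n + 1) → ℝ := fun j => if (j : ℕ) = 0 then -3 else 1

/-- The reflection `x ↦ x + (x·l)l` along `l`. -/
def reflAlong (n : ℕ) (l : Fin (n + 1) → ℝ) : Function.End (Fin (n + 1) → ℝ) :=
  fun x => x + ip n x l • l

/-- The simple roots: `l_0 = H - E_1 - E_2 - E_3` and `l_i = E_i - E_{i+1}`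
for `1 ≤ i ≤ n - 1`. -/
def root (n : ℕ) (i : Fin n) : Fin (n + 1) → ℝ :=
  if (i : ℕ) = 0 then
    fun j => if (j : ℕ) = 0 then 1 else if (j : ℕ) ≤ 3 then -1 else 0
  else
    fun j => if (j : ℕ) = (i : ℕ) then 1 else if (j : ℕ) = (i : ℕ) + 1 then -1 else 0

/-- The Weyl group `W_n`, generated by the simple reflections `s_{l_0}, …, s_{l_{n-1}}`.
(The generators are involutions, so the submonoid they generate coincides with the
subgroup they generate.) -/
def Wgroup (n : ℕ) : Submonoid (Function.End (Fin (n + 1) → ℝ)) :=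
  Submonoid.closure (Set.range fun i : Fin n => reflAlong n (root n i))

/-- The class `E_n`. -/
def En (n : ℕ) : Fin (n + 1) → ℝ := fun j => if (j : ℕ) = n then 1 else 0

/-- The set `ℰ_K` of exceptional classes: the `W_n`-orbit of `E_n`. -/
def EK (n : ℕ) : Set (Fin (n + 1) → ℝ) := {e | ∃ w ∈ Wgroup n, e = w (En n)}

/-- The class `H`. -/
def Hc (n : ℕ) : Fin (n + 1) → ℝ := fun j => if (j : ℕ) = 0 then 1 else 0

/-- The class `E_i` (for `i : Fin n`, this is `E_{i+1}` in the paper's indexing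
`E_1, …, E_n`). -/
def Ec (n : ℕ) (i : Fin n) : Fin (n + 1) → ℝ := fun j => if j = i.succ then 1 else 0

/-- The class `E_1 - E_2`. -/
def rootE12 (n : ℕ) : Fin (n + 1) → ℝ := fun j =>
  if (j : ℕ) = 1 then 1 else if (j : ℕ) = 2 then -1 else 0

/-- The `K`-root system `Γ_K`: the `W_n`-orbit of `E_1 - E_2`. -/
def GammaK (n : ℕ) : Set (Fin (n + 1) → ℝ) := {D | ∃ w ∈ Wgroup n, D = w (rootE12 n)}

/-- The coefficients `m_1, …, m_n` of a class `νH - m_1E_1 - ⋯ - m_nE_n`. -/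
def mcoord (n : ℕ) (v : Fin (n + 1) → ℝ) : Fin n → ℝ := fun i => -(v i.succ)

/-- A class `νH - m_1E_1 - ⋯ - m_nE_n` is reduced if
`m_1 ≥ m_2 ≥ ⋯ ≥ m_n ≥ 0` and `ν ≥ m_1 + m_2 + m_3`. -/
def IsReducedVec (n : ℕ) (v : Fin (n + 1) → ℝ) : Prop :=
  Antitone (mcoord n v) ∧ (∀ i, 0 ≤ mcoord n v i) ∧
    ∑ i ∈ Finset.univ.filter (fun i : Fin n => (i : ℕ) < 3), mcoord n v i ≤ v 0

section Aux

open Finset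

variable {n : ℕ}

/-! ### Bilinearity of `ip` -/

lemma ip_add_left (x y z : Fin (n+1) → ℝ) : ip n (x + y) z = ip n x z + ip n y z := by
  simp [ip, add_mul, Finset.sum_add_distrib]; ring

lemma ip_smul_left (a : ℝ) (x z : Fin (n+1) → ℝ) : ip n (a • x) z = a * ip n x z := by
  simp only [ip, Pi.smul_apply, smul_eq_mul, Finset.mul_sum]
  ring_nf
  rw [Finset.mul_sum]
  ring_nf

lemma ip_comm (x y : Fin (n+1) → ℝ) : ip n x y = ip n y x := by
  simp [ip, mul_comm]

lemma ip_add_right (x y z : Fin (n+1) → ℝ) : ip n x (y + z) = ip n x y + ip n x z := by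
  rw [ip_comm, ip_add_left, ip_comm y x, ip_comm z x]

lemma ip_smul_right (a : ℝ) (x z : Fin (n+1) → ℝ) : ip n x (a • z) = a * ip n x z := by
  rw [ip_comm, ip_smul_left, ip_comm]

lemma ip_neg_left (x z : Fin (n+1) → ℝ) : ip n (-x) z = -ip n x z := by
  have := ip_smul_left (-1 : ℝ) x z; simpa using this

lemma ip_sub_left (x y z : Fin (n+1) → ℝ) : ip n (x - y) z = ip n x z - ip n y z := by
  rw [sub_eq_add_neg, ip_add_left, ip_neg_left]; ring

lemma ip_sum_right {ι : Type*} (s : Finset ι) (x : Fin (n+1) → ℝ) (f : ι → Fin (n+1) → ℝ) :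
    ip n x (∑ i ∈ s, f i) = ∑ i ∈ s, ip n x (f i) := by
  classical
  induction s using Finset.induction_on with
  | empty => simp [ip]
  | insert a s h ih => rw [Finset.sum_insert h, ip_add_right, ih, Finset.sum_insert h]

/-! ### Reflections -/

lemma refl_apply (l x : Fin (n+1) → ℝ) : reflAlong n l x = x + ip n x l • l := rfl

lemma refl_add (l x y : Fin (n+1) → ℝ) :
    reflAlong n l (x + y) = reflAlong n l x + reflAlong n l y := by
  simp only [refl_apply, ip_add_left, add_smul]; abel

lemma refl_smul (l : Fin (n+1) → ℝ) (a : ℝ) (x : Fin (n+1) → ℝ) :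
    reflAlong n l (a • x) = a • reflAlong n l x := by
  simp only [refl_apply, ip_smul_left, smul_add, smul_smul]

lemma refl_invol (l : Fin (n+1) → ℝ) (hl : ip n l l = -2) (x : Fin (n+1) → ℝ) :
    reflAlong n l (reflAlong n l x) = x := by
  simp only [refl_apply, ip_add_left, ip_smul_left, hl, add_smul]
  module

lemma refl_isom (l : Fin (n+1) → ℝ) (hl : ip n l l = -2) (x y : Fin (n+1) → ℝ) :
    ip n (reflAlong n l x) (reflAlong n l y) = ip n x y := by
  simp only [refl_apply, ip_add_left, ip_add_right, ip_smul_left, ip_smul_right, hl]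
  ring_nf
  rw [ip_comm y l]; ring

end Aux
/-! ### Summation helpers -/

lemma sum_indicator_lt {n : ℕ} (m : ℕ) (hm : m ≤ n) (c : ℝ) :
    ∑ j : Fin n, (if (j : ℕ) < m then c else 0) = m * c := by
  rw [Fin.sum_univ_eq_sum_range (fun i => if i < m then c else 0) n]
  have h : ∀ i ∈ Finset.range n, (if i < m then c else 0) = if i ∈ Finset.range m then c else 0 := by
    intro i _; simp [Finset.mem_range]
  rw [Finset.sum_congr rfl h, Finset.sum_ite_mem,
    Finset.inter_eq_right.mpr (Finset.range_subset_range.mpr hm), Finset.sum_const, Finset.card_range]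
  simp [nsmul_eq_mul]

lemma sum_indicator_eq {n : ℕ} (p : ℕ) (hp : p < n) (f : Fin n → ℝ) :
    ∑ j : Fin n, (if (j : ℕ) = p then f j else 0) = f ⟨p, hp⟩ := by
  have h : ∀ j : Fin n, (if (j : ℕ) = p then f j else 0) = if j = ⟨p, hp⟩ then f j else 0 := by
    intro j; congr 1; simp [Fin.ext_iff]
  rw [Finset.sum_congr rfl (fun j _ => h j), Finset.sum_ite_eq' Finset.univ _ f]
  simp

/-! ### Root coordinates -/

lemma root_zero_succ {n : ℕ} (i : Fin n) (hi : (i : ℕ) = 0) (j : Fin n) :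
    root n i j.succ = if (j : ℕ) < 3 then -1 else 0 := by
  simp only [root, hi, if_true, Fin.val_succ]
  split_ifs <;> first | rfl | (exfalso; first | assumption | omega) | norm_num

lemma root_pos_succ {n : ℕ} (i : Fin n) (hi : (i : ℕ) ≠ 0) (j : Fin n) :
    root n i j.succ = if (j : ℕ) = (i : ℕ) - 1 then 1 else
      if (j : ℕ) = (i : ℕ) then -1 else 0 := by
  simp only [root, hi, if_false, Fin.val_succ]
  split_ifs <;> first | rfl | (exfalso; first | assumption | omega) | norm_num

lemma root_apply_zero {n : ℕ} (i : Fin n) : root n i 0 = if (i : ℕ) = 0 then 1 else 0 := by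
  by_cases hi : (i : ℕ) = 0
  · rw [root, if_pos hi]; simp [hi]
  · rw [root, if_neg hi]
    simp only [Fin.val_zero]
    split_ifs <;> first | rfl | (exfalso; omega)

/-! ### ip values on roots -/

lemma ip_root_self {n : ℕ} (hn : 3 ≤ n) (i : Fin n) : ip n (root n i) (root n i) = -2 := by
  by_cases hi : (i : ℕ) = 0
  · rw [ip]
    have h2 : ∀ j : Fin n, root n i j.succ * root n i j.succ = if (j : ℕ) < 3 then 1 else 0 := by
      intro j; rw [root_zero_succ i hi]; split_ifs <;> norm_num
    rw [Finset.sum_congr rfl (fun j _ => h2 j), sum_indicator_lt 3 hn 1, root_apply_zero,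
      if_pos hi]
    norm_num
  · rw [ip]
    have h2 : ∀ j : Fin n, root n i j.succ * root n i j.succ
        = (if (j : ℕ) = (i : ℕ) - 1 then 1 else 0) + (if (j : ℕ) = (i : ℕ) then 1 else 0) := by
      intro j; rw [root_pos_succ i hi]; split_ifs <;> first | rfl | (exfalso; first | assumption | omega) | norm_num
    rw [Finset.sum_congr rfl (fun j _ => h2 j), Finset.sum_add_distrib,
      sum_indicator_eq _ (by have := i.isLt; omega : (i : ℕ) - 1 < n) _,
      sum_indicator_eq _ i.isLt _, root_apply_zero, if_neg hi]
    norm_num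

lemma ip_root_zero_pos {n : ℕ} (hn : 3 ≤ n) (s t : Fin n) (hs : (s : ℕ) = 0)
    (ht : (t : ℕ) ≠ 0) :
    ip n (root n s) (root n t) = if (t : ℕ) = 3 then 1 else 0 := by
  rw [ip, root_apply_zero, root_apply_zero, if_pos hs, if_neg ht]
  rcases lt_trichotomy ((t : ℕ)) 3 with h3 | h3 | h3
  · have h2 : ∀ j : Fin n, root n s j.succ * root n t j.succ
        = (if (j : ℕ) = (t : ℕ) - 1 then -1 else 0) + (if (j : ℕ) = (t : ℕ) then 1 else 0) := by
      intro j; rw [root_zero_succ s hs, root_pos_succ t ht]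
      split_ifs <;> first | rfl | (exfalso; first | assumption | omega) | norm_num
    rw [Finset.sum_congr rfl (fun j _ => h2 j), Finset.sum_add_distrib,
      sum_indicator_eq _ (by have := t.isLt; omega : (t : ℕ) - 1 < n) _,
      sum_indicator_eq _ t.isLt _]
    have : ¬ ((t : ℕ) = 3) := by omega
    rw [if_neg this]; norm_num
  · have h2 : ∀ j : Fin n, root n s j.succ * root n t j.succ
        = (if (j : ℕ) = 2 then -1 else 0) := by
      intro j; rw [root_zero_succ s hs, root_pos_succ t ht]
      split_ifs <;> first | rfl | (exfalso; first | assumption | omega) | norm_num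
    rw [Finset.sum_congr rfl (fun j _ => h2 j), sum_indicator_eq _ (by omega : 2 < n) _,
      if_pos h3]
    norm_num
  · have h2 : ∀ j : Fin n, root n s j.succ * root n t j.succ = 0 := by
      intro j; rw [root_zero_succ s hs, root_pos_succ t ht]
      split_ifs <;> first | rfl | (exfalso; first | assumption | omega) | norm_num
    rw [Finset.sum_congr rfl (fun j _ => h2 j)]
    have : ¬ ((t : ℕ) = 3) := by omega
    rw [if_neg this]; norm_num

lemma ip_root_pos_pos {n : ℕ} (s t : Fin n) (hs : (s : ℕ) ≠ 0) (ht : (t : ℕ) ≠ 0)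
    (hst : s ≠ t) :
    ip n (root n s) (root n t)
      = if (t : ℕ) = (s : ℕ) + 1 ∨ (s : ℕ) = (t : ℕ) + 1 then 1 else 0 := by
  have hvne : (s : ℕ) ≠ (t : ℕ) := fun h => hst (Fin.ext h)
  rw [ip, root_apply_zero, root_apply_zero, if_neg hs, if_neg ht]
  by_cases h1 : (t : ℕ) = (s : ℕ) + 1
  · have h2 : ∀ j : Fin n, root n s j.succ * root n t j.succ
        = (if (j : ℕ) = (s : ℕ) then -1 else 0) := by
      intro j; rw [root_pos_succ s hs, root_pos_succ t ht]
      split_ifs <;> first | rfl | (exfalso; first | assumption | omega) | norm_num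
    rw [Finset.sum_congr rfl (fun j _ => h2 j), sum_indicator_eq _ s.isLt _, if_pos (Or.inl h1)]
    norm_num
  · by_cases h1' : (s : ℕ) = (t : ℕ) + 1
    · have h2 : ∀ j : Fin n, root n s j.succ * root n t j.succ
          = (if (j : ℕ) = (t : ℕ) then -1 else 0) := by
        intro j; rw [root_pos_succ s hs, root_pos_succ t ht]
        split_ifs <;> first | rfl | (exfalso; first | assumption | omega) | norm_num
      rw [Finset.sum_congr rfl (fun j _ => h2 j), sum_indicator_eq _ t.isLt _,
        if_pos (Or.inr h1')]
      norm_num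
    · have h2 : ∀ j : Fin n, root n s j.succ * root n t j.succ = 0 := by
        intro j; rw [root_pos_succ s hs, root_pos_succ t ht]
        split_ifs <;> first | rfl | (exfalso; first | assumption | omega) | norm_num
      rw [Finset.sum_congr rfl (fun j _ => h2 j), if_neg (by tauto)]
      norm_num

lemma ip_root_pair {n : ℕ} (hn : 3 ≤ n) {s t : Fin n} (hst : s ≠ t) :
    ip n (root n s) (root n t) = 0 ∨ ip n (root n s) (root n t) = 1 := by
  by_cases hs : (s : ℕ) = 0
  · have ht : (t : ℕ) ≠ 0 := fun h => hst (Fin.ext (by omega))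
    rw [ip_root_zero_pos hn s t hs ht]
    split_ifs <;> [right; left] <;> rfl
  · by_cases ht : (t : ℕ) = 0
    · rw [ip_comm, ip_root_zero_pos hn t s ht hs]
      split_ifs <;> [right; left] <;> rfl
    · rw [ip_root_pos_pos s t hs ht hst]
      split_ifs <;> [right; left] <;> rfl

lemma ip_root_pair_symm {n : ℕ} {s t : Fin n} :
    ip n (root n t) (root n s) = ip n (root n s) (root n t) := ip_comm _ _
/-! ### Generators, words -/

def gg (n : ℕ) (i : Fin n) : Function.End (Fin (n + 1) → ℝ) := reflAlong n (root n i)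

lemma gg_apply {n : ℕ} (i : Fin n) (x : Fin (n+1) → ℝ) :
    gg n i x = x + ip n x (root n i) • root n i := rfl

lemma gg_invol {n : ℕ} (hn : 3 ≤ n) (i : Fin n) : gg n i * gg n i = 1 := by
  funext x
  exact refl_invol _ (ip_root_self hn i) x

lemma gg_invol_apply {n : ℕ} (hn : 3 ≤ n) (i : Fin n) (w : Function.End (Fin (n+1) → ℝ)) :
    w * gg n i * gg n i = w := by
  rw [mul_assoc, gg_invol hn, mul_one]

lemma gg_comm {n : ℕ} {s t : Fin n} (h : ip n (root n s) (root n t) = 0) :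
    gg n s * gg n t = gg n t * gg n s := by
  have h' : ip n (root n t) (root n s) = 0 := by rw [ip_comm]; exact h
  funext x
  show gg n s (gg n t x) = gg n t (gg n s x)
  simp only [gg_apply, ip_add_left, ip_smul_left, h, h']
  module

lemma gg_braid {n : ℕ} (hn : 3 ≤ n) {s t : Fin n} (h : ip n (root n s) (root n t) = 1) :
    gg n s * gg n t * gg n s = gg n t * gg n s * gg n t := by
  have h' : ip n (root n t) (root n s) = 1 := by rw [ip_comm]; exact h
  funext x
  show gg n s (gg n t (gg n s x)) = gg n t (gg n s (gg n t x))
  simp only [gg_apply, ip_add_left, ip_smul_left, h, h', ip_root_self hn s, ip_root_self hn t]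
  module

lemma gg_act_self {n : ℕ} (hn : 3 ≤ n) (s : Fin n) : gg n s (root n s) = -root n s := by
  rw [gg_apply, ip_root_self hn s]; module

lemma gg_act_comm {n : ℕ} {s t : Fin n} (h : ip n (root n s) (root n t) = 0) :
    gg n t (root n s) = root n s := by
  rw [gg_apply, h]; module

lemma gg_act_braid {n : ℕ} {s t : Fin n} (h : ip n (root n s) (root n t) = 1) :
    gg n t (root n s) = root n s + root n t := by
  rw [gg_apply, h]; module

def wp (n : ℕ) (L : List (Fin n)) : Function.End (Fin (n + 1) → ℝ) := (L.map (gg n)).prod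

lemma wp_nil {n : ℕ} : wp n [] = 1 := rfl

lemma wp_cons {n : ℕ} (a : Fin n) (L : List (Fin n)) : wp n (a :: L) = gg n a * wp n L := by
  simp [wp]

lemma wp_append {n : ℕ} (L1 L2 : List (Fin n)) : wp n (L1 ++ L2) = wp n L1 * wp n L2 := by
  simp [wp]

lemma wp_singleton {n : ℕ} (a : Fin n) : wp n [a] = gg n a := by
  simp [wp]

lemma wp_add {n : ℕ} (L : List (Fin n)) (x y : Fin (n+1) → ℝ) :
    wp n L (x + y) = wp n L x + wp n L y := by
  induction L with
  | nil => rfl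
  | cons a L ih =>
    rw [wp_cons]
    show gg n a (wp n L (x + y)) = gg n a (wp n L x) + gg n a (wp n L y)
    rw [ih]; exact refl_add _ _ _

lemma wp_smul {n : ℕ} (L : List (Fin n)) (a : ℝ) (x : Fin (n+1) → ℝ) :
    wp n L (a • x) = a • wp n L x := by
  induction L with
  | nil => rfl
  | cons b L ih =>
    rw [wp_cons]
    show gg n b (wp n L (a • x)) = a • gg n b (wp n L x)
    rw [ih]; exact refl_smul _ _ _

lemma wp_neg {n : ℕ} (L : List (Fin n)) (x : Fin (n+1) → ℝ) : wp n L (-x) = -wp n L x := by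
  have := wp_smul L (-1) x
  simpa using this

/-! ### Positive combinations -/

def PosR (n : ℕ) (x : Fin (n+1) → ℝ) : Prop :=
  ∃ c : Fin n → ℝ, (∀ i, 0 ≤ c i) ∧ x = ∑ i, c i • root n i

lemma posR_root {n : ℕ} (i : Fin n) : PosR n (root n i) := by
  refine ⟨fun j => if j = i then 1 else 0, fun j => by dsimp only; split_ifs <;> norm_num, ?_⟩
  have h : ∀ j : Fin n, (fun j => if j = i then (1:ℝ) else 0) j • root n j
      = if j = i then root n j else 0 := fun j => by dsimp only; split_ifs <;> simp
  rw [Finset.sum_congr rfl fun j _ => h j, Finset.sum_ite_eq' Finset.univ i (root n)]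
  simp

lemma posR_add {n : ℕ} {x y : Fin (n+1) → ℝ} (hx : PosR n x) (hy : PosR n y) :
    PosR n (x + y) := by
  obtain ⟨c, hc, rfl⟩ := hx
  obtain ⟨d, hd, rfl⟩ := hy
  exact ⟨c + d, fun i => add_nonneg (hc i) (hd i), by simp [add_smul, Finset.sum_add_distrib]⟩

lemma posR_smul {n : ℕ} {a : ℝ} (ha : 0 ≤ a) {x : Fin (n+1) → ℝ} (hx : PosR n x) :
    PosR n (a • x) := by
  obtain ⟨c, hc, rfl⟩ := hx
  refine ⟨fun i => a * c i, fun i => mul_nonneg ha (hc i), ?_⟩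
  rw [Finset.smul_sum]
  exact Finset.sum_congr rfl fun i _ => by rw [smul_smul]
/-! ### Words and lengths -/

def IsW (n : ℕ) (w : Function.End (Fin (n + 1) → ℝ)) : Prop := ∃ L, wp n L = w

def wlen (n : ℕ) (w : Function.End (Fin (n + 1) → ℝ)) : ℕ :=
  sInf {k | ∃ L, wp n L = w ∧ L.length = k}

lemma isW_mul {n : ℕ} {w : Function.End (Fin (n + 1) → ℝ)} (hw : IsW n w) (s : Fin n) :
    IsW n (w * gg n s) := by
  obtain ⟨L, rfl⟩ := hw
  exact ⟨L ++ [s], by rw [wp_append, wp_singleton]⟩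

lemma wlen_le {n : ℕ} (L : List (Fin n)) (w : Function.End (Fin (n + 1) → ℝ))
    (h : wp n L = w) : wlen n w ≤ L.length :=
  Nat.sInf_le ⟨L, h, rfl⟩

lemma exists_word {n : ℕ} {w : Function.End (Fin (n + 1) → ℝ)} (hw : IsW n w) :
    ∃ L, wp n L = w ∧ L.length = wlen n w := by
  obtain ⟨L, hL⟩ := hw
  have : wlen n w ∈ {k | ∃ L, wp n L = w ∧ L.length = k} :=
    Nat.sInf_mem ⟨L.length, L, hL, rfl⟩
  exact this

lemma eq_one_of_wlen_zero {n : ℕ} {w : Function.End (Fin (n + 1) → ℝ)} (hw : IsW n w)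
    (h0 : wlen n w = 0) : w = 1 := by
  obtain ⟨L, hL, hlen⟩ := exists_word hw
  rw [h0, List.length_eq_zero_iff] at hlen
  rw [← hL, hlen, wp_nil]

lemma wlen_mul_le {n : ℕ} {w : Function.End (Fin (n + 1) → ℝ)} (hw : IsW n w) (s : Fin n) :
    wlen n (w * gg n s) ≤ wlen n w + 1 := by
  obtain ⟨L, hL, hlen⟩ := exists_word hw
  have : wp n (L ++ [s]) = w * gg n s := by rw [wp_append, wp_singleton, hL]
  have h2 := wlen_le _ _ this
  simpa [hlen] using h2

lemma wlen_le_mul {n : ℕ} (hn : 3 ≤ n) {w : Function.End (Fin (n + 1) → ℝ)} (hw : IsW n w)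
    (s : Fin n) : wlen n w ≤ wlen n (w * gg n s) + 1 := by
  calc wlen n w = wlen n ((w * gg n s) * gg n s) := by rw [mul_assoc, gg_invol hn, mul_one]
    _ ≤ wlen n (w * gg n s) + 1 := wlen_mul_le (isW_mul hw s) s

lemma wlen_mul_wp_le {n : ℕ} {w : Function.End (Fin (n + 1) → ℝ)} (hw : IsW n w)
    (u : List (Fin n)) : wlen n (w * wp n u) ≤ wlen n w + u.length := by
  obtain ⟨L, hL, hlen⟩ := exists_word hw
  have : wp n (L ++ u) = w * wp n u := by rw [wp_append, hL]
  have h2 := wlen_le _ _ this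
  simpa [hlen] using h2

/-! ### Coset decomposition -/

lemma coset {n : ℕ} (hn : 3 ≤ n) : ∀ (N : ℕ) (w : Function.End (Fin (n + 1) → ℝ)),
    IsW n w → wlen n w < N → ∀ s t : Fin n,
    ∃ v u, IsW n v ∧ (∀ x ∈ u, x = s ∨ x = t) ∧ w = v * wp n u ∧
      wlen n w = wlen n v + u.length ∧ wlen n v ≤ wlen n (v * gg n s) ∧
      wlen n v ≤ wlen n (v * gg n t) := by
  intro N
  induction N with
  | zero => intro w _ h; omega
  | succ N ih =>
    intro w hw hN s t
    by_cases hs : wlen n (w * gg n s) < wlen n w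
    · obtain ⟨v, u, hv, hu, he, hl, hvs, hvt⟩ :=
        ih (w * gg n s) (isW_mul hw s) (by omega) s t
      refine ⟨v, u ++ [s], hv, ?_, ?_, ?_, hvs, hvt⟩
      · intro x hx
        rcases List.mem_append.mp hx with h | h
        · exact hu x h
        · left; simpa using h
      · have : v * wp n (u ++ [s]) = w := by
          rw [wp_append, wp_singleton, ← mul_assoc, ← he, gg_invol_apply hn]
        exact this.symm
      · have h1 : wlen n w ≤ wlen n (w * gg n s) + 1 := wlen_le_mul hn hw s
        simp only [List.length_append, List.length_singleton]
        omega
    · by_cases ht : wlen n (w * gg n t) < wlen n w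
      · obtain ⟨v, u, hv, hu, he, hl, hvs, hvt⟩ :=
          ih (w * gg n t) (isW_mul hw t) (by omega) s t
        refine ⟨v, u ++ [t], hv, ?_, ?_, ?_, hvs, hvt⟩
        · intro x hx
          rcases List.mem_append.mp hx with h | h
          · exact hu x h
          · right; simpa using h
        · have : v * wp n (u ++ [t]) = w := by
            rw [wp_append, wp_singleton, ← mul_assoc, ← he, gg_invol_apply hn]
          exact this.symm
        · have h1 : wlen n w ≤ wlen n (w * gg n t) + 1 := wlen_le_mul hn hw t
          simp only [List.length_append, List.length_singleton]
          omega
      · exact ⟨w, [], hw, by simp, by rw [wp_nil, mul_one], by simp,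
          le_of_not_gt hs, le_of_not_gt ht⟩
/-! ### Dihedral canonical forms -/

lemma cf_comm {n : ℕ} (hn : 3 ≤ n) {s t : Fin n}
    (h : ip n (root n s) (root n t) = 0) :
    ∀ u : List (Fin n), (∀ x ∈ u, x = s ∨ x = t) →
    ∃ u' : List (Fin n), (u' = [] ∨ u' = [s] ∨ u' = [t] ∨ u' = [s, t]) ∧
      wp n u' = wp n u ∧ u'.length ≤ u.length := by
  have hcomm : gg n s * gg n t = gg n t * gg n s := gg_comm h
  intro u
  induction u with
  | nil => exact fun _ => ⟨[], Or.inl rfl, rfl, le_refl 0⟩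
  | cons a u ih =>
    intro hmem
    obtain ⟨c, hc, hcp, hcl⟩ := ih (fun x hx => hmem x (List.mem_cons_of_mem a hx))
    have hwu : wp n (a :: u) = gg n a * wp n c := by rw [wp_cons, hcp]
    have ha := hmem a List.mem_cons_self
    rcases ha with rfl | rfl <;> rcases hc with rfl | rfl | rfl | rfl
    · refine ⟨[a], by tauto, ?_, by simp only [List.length_cons, List.length_nil] at hcl ⊢; omega⟩
      rw [hwu]; simp only [wp_cons, wp_singleton, wp_nil, mul_one]
    · refine ⟨[], by tauto, ?_, by simp only [List.length_cons, List.length_nil] at hcl ⊢; omega⟩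
      rw [hwu]; simp only [wp_cons, wp_singleton, wp_nil, mul_one]
      exact (gg_invol hn a).symm
    · refine ⟨[a, t], by tauto, ?_, by simp only [List.length_cons, List.length_nil] at hcl ⊢; omega⟩
      rw [hwu]; simp only [wp_cons, wp_singleton, wp_nil, mul_one]
    · refine ⟨[t], by tauto, ?_, by simp only [List.length_cons, List.length_nil] at hcl ⊢; omega⟩
      rw [hwu]; simp only [wp_cons, wp_singleton, wp_nil, mul_one]
      rw [← mul_assoc, gg_invol hn, one_mul]
    · refine ⟨[a], by tauto, ?_, by simp only [List.length_cons, List.length_nil] at hcl ⊢; omega⟩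
      rw [hwu]; simp only [wp_cons, wp_singleton, wp_nil, mul_one]
    · refine ⟨[s, a], by tauto, ?_, by simp only [List.length_cons, List.length_nil] at hcl ⊢; omega⟩
      rw [hwu]; simp only [wp_cons, wp_singleton, wp_nil, mul_one]
      exact hcomm
    · refine ⟨[], by tauto, ?_, by simp only [List.length_cons, List.length_nil] at hcl ⊢; omega⟩
      rw [hwu]; simp only [wp_cons, wp_singleton, wp_nil, mul_one]
      exact (gg_invol hn a).symm
    · refine ⟨[s], by tauto, ?_, by simp only [List.length_cons, List.length_nil] at hcl ⊢; omega⟩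
      rw [hwu]; simp only [wp_cons, wp_singleton, wp_nil, mul_one]
      rw [hcomm, ← mul_assoc, gg_invol hn, one_mul]

lemma cf_braid {n : ℕ} (hn : 3 ≤ n) {s t : Fin n}
    (h : ip n (root n s) (root n t) = 1) :
    ∀ u : List (Fin n), (∀ x ∈ u, x = s ∨ x = t) →
    ∃ u' : List (Fin n),
      (u' = [] ∨ u' = [s] ∨ u' = [t] ∨ u' = [s, t] ∨ u' = [t, s] ∨ u' = [s, t, s]) ∧
      wp n u' = wp n u ∧ u'.length ≤ u.length := by
  have hbraid : gg n s * gg n t * gg n s = gg n t * gg n s * gg n t := gg_braid hn h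
  intro u
  induction u with
  | nil => exact fun _ => ⟨[], Or.inl rfl, rfl, le_refl 0⟩
  | cons a u ih =>
    intro hmem
    obtain ⟨c, hc, hcp, hcl⟩ := ih (fun x hx => hmem x (List.mem_cons_of_mem a hx))
    have hwu : wp n (a :: u) = gg n a * wp n c := by rw [wp_cons, hcp]
    have ha := hmem a List.mem_cons_self
    rcases ha with rfl | rfl <;> rcases hc with rfl | rfl | rfl | rfl | rfl | rfl
    -- a plays the role of s
    · refine ⟨[a], by tauto, ?_, by simp only [List.length_cons, List.length_nil] at hcl ⊢; omega⟩
      rw [hwu]; simp only [wp_cons, wp_singleton, wp_nil, mul_one]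
    · refine ⟨[], by tauto, ?_, by simp only [List.length_cons, List.length_nil] at hcl ⊢; omega⟩
      rw [hwu]; simp only [wp_cons, wp_singleton, wp_nil, mul_one]
      exact (gg_invol hn a).symm
    · refine ⟨[a, t], by tauto, ?_, by simp only [List.length_cons, List.length_nil] at hcl ⊢; omega⟩
      rw [hwu]; simp only [wp_cons, wp_singleton, wp_nil, mul_one]
    · refine ⟨[t], by tauto, ?_, by simp only [List.length_cons, List.length_nil] at hcl ⊢; omega⟩
      rw [hwu]; simp only [wp_cons, wp_singleton, wp_nil, mul_one]
      rw [← mul_assoc, gg_invol hn, one_mul]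
    · refine ⟨[a, t, a], by tauto, ?_, by simp only [List.length_cons, List.length_nil] at hcl ⊢; omega⟩
      rw [hwu]; simp only [wp_cons, wp_singleton, wp_nil, mul_one]
    · refine ⟨[t, a], by tauto, ?_, by simp only [List.length_cons, List.length_nil] at hcl ⊢; omega⟩
      rw [hwu]; simp only [wp_cons, wp_singleton, wp_nil, mul_one]
      rw [← mul_assoc, gg_invol hn, one_mul]
    -- a plays the role of t
    · refine ⟨[a], by tauto, ?_, by simp only [List.length_cons, List.length_nil] at hcl ⊢; omega⟩
      rw [hwu]; simp only [wp_cons, wp_singleton, wp_nil, mul_one]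
    · refine ⟨[a, s], by tauto, ?_, by simp only [List.length_cons, List.length_nil] at hcl ⊢; omega⟩
      rw [hwu]; simp only [wp_cons, wp_singleton, wp_nil, mul_one]
    · refine ⟨[], by tauto, ?_, by simp only [List.length_cons, List.length_nil] at hcl ⊢; omega⟩
      rw [hwu]; simp only [wp_cons, wp_singleton, wp_nil, mul_one]
      exact (gg_invol hn a).symm
    · refine ⟨[s, a, s], by tauto, ?_, by simp only [List.length_cons, List.length_nil] at hcl ⊢; omega⟩
      rw [hwu]; simp only [wp_cons, wp_singleton, wp_nil, mul_one]
      rw [← mul_assoc, hbraid, mul_assoc]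
    · refine ⟨[s], by tauto, ?_, by simp only [List.length_cons, List.length_nil] at hcl ⊢; omega⟩
      rw [hwu]; simp only [wp_cons, wp_singleton, wp_nil, mul_one]
      rw [← mul_assoc, gg_invol hn, one_mul]
    · refine ⟨[s, a], by tauto, ?_, by simp only [List.length_cons, List.length_nil] at hcl ⊢; omega⟩
      rw [hwu]; simp only [wp_cons, wp_singleton, wp_nil, mul_one]
      rw [← mul_assoc, ← mul_assoc, ← hbraid, mul_assoc, mul_assoc, gg_invol hn, mul_one]
/-! ### Main positivity theorem -/

lemma one_apply' {n : ℕ} (x : Fin (n+1) → ℝ) : (1 : Function.End (Fin (n+1) → ℝ)) x = x := rfl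

lemma mul_apply' {n : ℕ} (f g : Function.End (Fin (n+1) → ℝ)) (x : Fin (n+1) → ℝ) :
    (f * g) x = f (g x) := rfl

lemma gs_act_sum {n : ℕ} (hn : 3 ≤ n) {s t : Fin n}
    (h : ip n (root n s) (root n t) = 1) :
    gg n s (root n s + root n t) = root n t := by
  have h' : ip n (root n t) (root n s) = 1 := (ip_comm _ _).trans h
  rw [gg_apply, ip_add_left, ip_root_self hn s, h']
  module

lemma Tmain {n : ℕ} (hn : 3 ≤ n) : ∀ N : ℕ, ∀ w, IsW n w → wlen n w < N → ∀ s : Fin n,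
    wlen n w ≤ wlen n (w * gg n s) → PosR n (w (root n s)) := by
  intro N
  induction N with
  | zero => intro w _ h; omega
  | succ N ih =>
    intro w hw hN s hws
    by_cases h0 : wlen n w = 0
    · rw [eq_one_of_wlen_zero hw h0, one_apply']
      exact posR_root s
    obtain ⟨L, hL, hLlen⟩ := exists_word hw
    have hLne : L ≠ [] := by
      intro h; rw [h] at hLlen; simp at hLlen; omega
    obtain ⟨L', t, rfl⟩ : ∃ L' t, L = L' ++ [t] := by
      rcases List.eq_nil_or_concat L with h | ⟨L', t', h⟩
      · exact absurd h hLne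
      · exact ⟨L', t', by simpa [List.concat_eq_append] using h⟩
    have hw'len : wlen n (wp n L') < wlen n w := by
      have h1 : wlen n (wp n L') ≤ L'.length := wlen_le L' _ rfl
      have h2 : L'.length + 1 = wlen n w := by rw [← hLlen]; simp
      omega
    have hwt : wlen n (w * gg n t) < wlen n w := by
      have he : w * gg n t = wp n L' := by
        rw [← hL, wp_append, wp_singleton, gg_invol_apply hn]
      rw [he]; exact hw'len
    have hts : s ≠ t := by
      rintro rfl; omega
    -- coset decomposition
    obtain ⟨v, u, hv, humem, hdecomp, hlen, hvs, hvt⟩ := coset hn (N+1) w hw hN s t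
    have hune : u ≠ [] := by
      rintro rfl
      rw [wp_nil, mul_one] at hdecomp
      rw [← hdecomp] at hvt
      omega
    have hupos : 1 ≤ u.length := by
      rcases u with _ | ⟨x, u⟩
      · exact absurd rfl hune
      · simp
    have hvlt : wlen n v < N := by omega
    have IHs : PosR n (v (root n s)) := ih v hv hvlt s hvs
    have IHt : PosR n (v (root n t)) := ih v hv hvlt t hvt
    obtain ⟨Lv, hLv⟩ := hv
    rcases ip_root_pair hn hts with hm | hm
    · -- commuting case
      obtain ⟨u', hcanon, hpe, hle⟩ := cf_comm hn hm u humem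
      have hminlen : wlen n w ≤ wlen n v + u'.length := by
        have : w = v * wp n u' := by rw [hdecomp, hpe]
        rw [this]
        exact wlen_mul_wp_le ⟨Lv, hLv⟩ u'
      rcases hcanon with rfl | rfl | rfl | rfl
      · exfalso; simp only [List.length_nil] at hminlen; omega
      · exfalso
        have he : w * gg n s = v := by
          rw [hdecomp, ← hpe, wp_singleton, gg_invol_apply hn]
        rw [he] at hws
        simp only [List.length_cons, List.length_nil] at hminlen
        omega
      · have he : w (root n s) = v (root n s) := by
          rw [hdecomp, ← hpe, wp_singleton, mul_apply', gg_act_comm hm]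
        rw [he]; exact IHs
      · exfalso
        have he : w * gg n s = v * gg n t := by
          rw [hdecomp, ← hpe]
          simp only [wp_cons, wp_singleton, wp_nil, mul_one]
          rw [mul_assoc]
          congr 1
          rw [gg_comm hm, mul_assoc, gg_invol hn, mul_one]
        have h1 : wlen n (v * gg n t) ≤ wlen n v + 1 := wlen_mul_le ⟨Lv, hLv⟩ t
        rw [he] at hws
        simp only [List.length_cons, List.length_nil] at hminlen hle
        omega
    · -- braid case
      obtain ⟨u', hcanon, hpe, hle⟩ := cf_braid hn hm u humem
      have hminlen : wlen n w ≤ wlen n v + u'.length := by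
        have : w = v * wp n u' := by rw [hdecomp, hpe]
        rw [this]
        exact wlen_mul_wp_le ⟨Lv, hLv⟩ u'
      rcases hcanon with rfl | rfl | rfl | rfl | rfl | rfl
      · exfalso; simp only [List.length_nil] at hminlen; omega
      · exfalso
        have he : w * gg n s = v := by
          rw [hdecomp, ← hpe, wp_singleton, gg_invol_apply hn]
        rw [he] at hws
        simp only [List.length_cons, List.length_nil] at hminlen
        omega
      · have he : w (root n s) = v (root n s) + v (root n t) := by
          rw [hdecomp, ← hpe, wp_singleton, mul_apply', gg_act_braid hm, ← hLv, wp_add]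
        rw [he]; exact posR_add IHs IHt
      · -- u' = [s, t] : w (root s) = v (root t)
        have he : w (root n s) = v (root n t) := by
          rw [hdecomp, ← hpe]
          simp only [wp_cons, wp_singleton, wp_nil, mul_one, mul_apply']
          rw [gg_act_braid hm, gs_act_sum hn hm]
        rw [he]; exact IHt
      · -- u' = [t, s] : excluded
        exfalso
        have he : w * gg n s = v * gg n t := by
          rw [hdecomp, ← hpe]
          simp only [wp_cons, wp_singleton, wp_nil, mul_one]
          rw [mul_assoc, mul_assoc, gg_invol hn, mul_one]
        have h1 : wlen n (v * gg n t) ≤ wlen n v + 1 := wlen_mul_le ⟨Lv, hLv⟩ t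
        rw [he] at hws
        simp only [List.length_cons, List.length_nil] at hminlen hle
        omega
      · -- u' = [s, t, s] : excluded
        exfalso
        have he : w * gg n s = v * wp n [s, t] := by
          rw [hdecomp, ← hpe]
          simp only [wp_cons, wp_singleton, wp_nil, mul_one]
          rw [mul_assoc, mul_assoc, mul_assoc, gg_invol hn, mul_one]
        have h1 : wlen n (v * wp n [s, t]) ≤ wlen n v + 2 :=
          wlen_mul_wp_le ⟨Lv, hLv⟩ [s, t]
        rw [he] at hws
        simp only [List.length_cons, List.length_nil] at hminlen hle
        omega

lemma posOrNeg {n : ℕ} (hn : 3 ≤ n) (w : Function.End (Fin (n+1) → ℝ)) (hw : IsW n w)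
    (s : Fin n) : PosR n (w (root n s)) ∨ PosR n (-(w (root n s))) := by
  by_cases hws : wlen n w ≤ wlen n (w * gg n s)
  · left
    exact Tmain hn (wlen n w + 1) w hw (Nat.lt_succ_self _) s hws
  · right
    push_neg at hws
    set v := w * gg n s with hv
    have hvW : IsW n v := isW_mul hw s
    have hvs : wlen n v ≤ wlen n (v * gg n s) := by
      have he : v * gg n s = w := gg_invol_apply hn s w
      rw [he]; omega
    have hp : PosR n (v (root n s)) := Tmain hn (wlen n v + 1) v hvW (Nat.lt_succ_self _) s hvs
    have he : w (root n s) = -(v (root n s)) := by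
      obtain ⟨Lv, hLv⟩ := hvW
      have h2 : w = v * gg n s := (gg_invol_apply hn s w).symm
      rw [h2, mul_apply', gg_act_self hn s, ← hLv, wp_neg]
    rw [he, neg_neg]; exact hp
/-! ### Orbit elements as words -/

lemma gamma_word {n : ℕ} {D : Fin (n+1) → ℝ} (hD : D ∈ GammaK n) :
    ∃ L : List (Fin n), D = wp n L (rootE12 n) := by
  obtain ⟨w, hw, rfl⟩ := hD
  obtain ⟨l, hl, hprod⟩ := Submonoid.exists_list_of_mem_closure hw
  suffices h : ∀ l : List (Function.End (Fin (n+1) → ℝ)),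
      (∀ y ∈ l, y ∈ Set.range fun i : Fin n => reflAlong n (root n i)) →
      ∃ L, wp n L = l.prod by
    obtain ⟨L, hL⟩ := h l hl
    exact ⟨L, by rw [← hprod, ← hL]⟩
  intro l
  induction l with
  | nil => exact fun _ => ⟨[], rfl⟩
  | cons y l ih =>
    intro hmem
    obtain ⟨L, hL⟩ := ih (fun z hz => hmem z (List.mem_cons_of_mem y hz))
    obtain ⟨i, hi⟩ := hmem y List.mem_cons_self
    refine ⟨i :: L, ?_⟩
    rw [wp_cons, hL, List.prod_cons]
    have hi' : reflAlong n (root n i) = y := hi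
    show reflAlong n (root n i) * l.prod = y * l.prod
    rw [hi']

lemma rootE12_eq {n : ℕ} (hn : 3 ≤ n) : rootE12 n = root n ⟨1, by omega⟩ := by
  funext j
  rw [root, if_neg (by simp)]
  show rootE12 n j = if (j : ℕ) = 1 then 1 else if (j : ℕ) = 1 + 1 then -1 else 0
  rw [rootE12]

/-! ### Integrality invariant -/

def IntV (n : ℕ) (x : Fin (n+1) → ℝ) : Prop := ∃ z : Fin (n+1) → ℤ, ∀ j, x j = (z j : ℝ)

lemma intV_ip {n : ℕ} {x y : Fin (n+1) → ℝ} (hx : IntV n x) (hy : IntV n y) :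
    ∃ m : ℤ, ip n x y = (m : ℝ) := by
  obtain ⟨zx, hzx⟩ := hx
  obtain ⟨zy, hzy⟩ := hy
  refine ⟨zx 0 * zy 0 - ∑ j : Fin n, zx j.succ * zy j.succ, ?_⟩
  rw [ip]
  push_cast
  rw [hzx, hzy]
  congr 1
  exact Finset.sum_congr rfl fun j _ => by rw [hzx, hzy]

lemma intV_root {n : ℕ} (i : Fin n) : IntV n (root n i) := by
  by_cases hi : (i : ℕ) = 0
  · refine ⟨fun j => if (j : ℕ) = 0 then 1 else if (j : ℕ) ≤ 3 then -1 else 0, fun j => ?_⟩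
    rw [root, if_pos hi]
    dsimp only
    split_ifs <;> norm_num
  · refine ⟨fun j => if (j : ℕ) = (i : ℕ) then 1 else if (j : ℕ) = (i : ℕ) + 1 then -1 else 0,
      fun j => ?_⟩
    rw [root, if_neg hi]
    dsimp only
    split_ifs <;> norm_num

lemma intV_add_zsmul {n : ℕ} {x y : Fin (n+1) → ℝ} (hx : IntV n x) (hy : IntV n y) (m : ℤ) :
    IntV n (x + (m : ℝ) • y) := by
  obtain ⟨zx, hzx⟩ := hx
  obtain ⟨zy, hzy⟩ := hy
  exact ⟨fun j => zx j + m * zy j, fun j => by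
    simp [hzx, hzy]⟩

lemma intV_gg {n : ℕ} {x : Fin (n+1) → ℝ} (hx : IntV n x) (i : Fin n) :
    IntV n (gg n i x) := by
  obtain ⟨m, hm⟩ := intV_ip hx (intV_root i)
  have : gg n i x = x + (m : ℝ) • root n i := by rw [gg_apply, hm]
  rw [this]
  exact intV_add_zsmul hx (intV_root i) m

lemma intV_wp {n : ℕ} (L : List (Fin n)) {x : Fin (n+1) → ℝ} (hx : IntV n x) :
    IntV n (wp n L x) := by
  induction L with
  | nil => exact hx
  | cons a L ih =>
    rw [wp_cons, mul_apply']
    exact intV_gg ih a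

/-! ### ip-invariants of the action -/

lemma ip_wp_self {n : ℕ} (hn : 3 ≤ n) (L : List (Fin n)) (x : Fin (n+1) → ℝ) :
    ip n (wp n L x) (wp n L x) = ip n x x := by
  induction L with
  | nil => rfl
  | cons a L ih =>
    rw [wp_cons, mul_apply']
    rw [show gg n a (wp n L x) = reflAlong n (root n a) (wp n L x) from rfl,
      refl_isom _ (ip_root_self hn a), ih]

lemma Kc_succ {n : ℕ} (j : Fin n) : Kc n j.succ = 1 := by
  rw [Kc]
  simp [Fin.val_succ]

lemma Kc_zero {n : ℕ} : Kc n 0 = -3 := by rw [Kc]; simp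

lemma ip_root_K {n : ℕ} (hn : 3 ≤ n) (i : Fin n) : ip n (root n i) (Kc n) = 0 := by
  by_cases hi : (i : ℕ) = 0
  · rw [ip, Kc_zero, root_apply_zero, if_pos hi]
    have h2 : ∀ j : Fin n, root n i j.succ * Kc n j.succ = if (j : ℕ) < 3 then -1 else 0 := by
      intro j; rw [root_zero_succ i hi, Kc_succ]; split_ifs <;> norm_num
    rw [Finset.sum_congr rfl (fun j _ => h2 j), sum_indicator_lt 3 hn (-1)]
    norm_num
  · rw [ip, Kc_zero, root_apply_zero, if_neg hi]
    have h2 : ∀ j : Fin n, root n i j.succ * Kc n j.succ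
        = (if (j : ℕ) = (i : ℕ) - 1 then 1 else 0) + (if (j : ℕ) = (i : ℕ) then -1 else 0) := by
      intro j; rw [root_pos_succ i hi, Kc_succ]
      split_ifs <;> first | rfl | (exfalso; first | assumption | omega) | norm_num
    rw [Finset.sum_congr rfl (fun j _ => h2 j), Finset.sum_add_distrib,
      sum_indicator_eq _ (by have := i.isLt; omega : (i : ℕ) - 1 < n) _,
      sum_indicator_eq _ i.isLt _]
    norm_num

lemma ip_gg_K {n : ℕ} (hn : 3 ≤ n) (i : Fin n) (x : Fin (n+1) → ℝ) :
    ip n (gg n i x) (Kc n) = ip n x (Kc n) := by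
  rw [gg_apply, ip_add_left, ip_smul_left, ip_root_K hn, mul_zero, add_zero]

lemma ip_wp_K {n : ℕ} (hn : 3 ≤ n) (L : List (Fin n)) (x : Fin (n+1) → ℝ) :
    ip n (wp n L x) (Kc n) = ip n x (Kc n) := by
  induction L with
  | nil => rfl
  | cons a L ih => rw [wp_cons, mul_apply', ip_gg_K hn, ih]

lemma ip_Hc {n : ℕ} (D : Fin (n+1) → ℝ) : ip n D (Hc n) = D 0 := by
  rw [ip]
  have h0 : Hc n 0 = 1 := by rw [Hc]; simp
  have hs : ∀ j : Fin n, Hc n j.succ = 0 := by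
    intro j; rw [Hc]; simp [Fin.val_succ]
  rw [h0]
  have : ∀ j : Fin n, D j.succ * Hc n j.succ = 0 := fun j => by rw [hs, mul_zero]
  rw [Finset.sum_congr rfl fun j _ => this j]
  simp

/-! ### rootE12 invariants -/

lemma rootE12_self {n : ℕ} (hn : 3 ≤ n) : ip n (rootE12 n) (rootE12 n) = -2 := by
  rw [rootE12_eq hn]; exact ip_root_self hn _

lemma rootE12_K {n : ℕ} (hn : 3 ≤ n) : ip n (rootE12 n) (Kc n) = 0 := by
  rw [rootE12_eq hn]; exact ip_root_K hn _

lemma rootE12_int {n : ℕ} (hn : 3 ≤ n) : IntV n (rootE12 n) := by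
  rw [rootE12_eq hn]; exact intV_root _

/-! ### The d = 0 arithmetic -/

lemma sum2_classify {n : ℕ} (g : Fin n → ℤ) (h2 : ∑ k, g k * g k = 2) (h0 : ∑ k, g k = 0) :
    ∃ i j : Fin n, i ≠ j ∧ ∀ k, g k = (if k = i then 1 else if k = j then -1 else 0) := by
  have hex : ∃ i, 0 < g i := by
    by_contra h
    push_neg at h
    have hall : ∀ k ∈ Finset.univ, g k = 0 :=
      (Finset.sum_eq_zero_iff_of_nonpos (fun k _ => h k)).mp h0
    rw [Finset.sum_congr rfl (fun k hk => by rw [hall k hk, mul_zero])] at h2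
    simp at h2
  have hex' : ∃ j, g j < 0 := by
    by_contra h
    push_neg at h
    have hall : ∀ k ∈ Finset.univ, g k = 0 :=
      (Finset.sum_eq_zero_iff_of_nonneg (fun k _ => h k)).mp h0
    rw [Finset.sum_congr rfl (fun k hk => by rw [hall k hk, mul_zero])] at h2
    simp at h2
  obtain ⟨i, hi⟩ := hex
  obtain ⟨j, hj⟩ := hex'
  have hij : i ≠ j := fun h => by rw [h] at hi; omega
  have hsq : ∀ k, 0 ≤ g k * g k := fun k => mul_self_nonneg (g k)
  have hpair : g i * g i + g j * g j ≤ 2 := by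
    calc g i * g i + g j * g j
        = ∑ k ∈ ({i, j} : Finset (Fin n)), g k * g k := (Finset.sum_pair (f := fun k => g k * g k) hij).symm
      _ ≤ ∑ k, g k * g k :=
          Finset.sum_le_sum_of_subset_of_nonneg (Finset.subset_univ _) fun k _ _ => hsq k
      _ = 2 := h2
  have hgi : g i = 1 := by nlinarith
  have hgj : g j = -1 := by nlinarith
  have hrest : ∀ k, k ≠ i → k ≠ j → g k = 0 := by
    intro k hki hkj
    have hsub : ({i, j} : Finset (Fin n)) ⊆ Finset.univ := Finset.subset_univ _
    have hsplit : ∑ l ∈ Finset.univ \ {i, j}, g l * g l = 0 := by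
      have h4 : ∑ l ∈ Finset.univ \ ({i, j} : Finset (Fin n)), g l * g l
          + ∑ l ∈ ({i, j} : Finset (Fin n)), g l * g l = ∑ l, g l * g l :=
        Finset.sum_sdiff hsub
      have h5 : ∑ l ∈ ({i, j} : Finset (Fin n)), g l * g l = 2 := by
        rw [Finset.sum_pair (f := fun k => g k * g k) hij, hgi, hgj]
        norm_num
      rw [h5, h2] at h4
      omega
    have hzero := (Finset.sum_eq_zero_iff_of_nonneg
      (fun l _ => hsq l)).mp hsplit k (by simp [hki, hkj])
    exact mul_self_eq_zero.mp hzero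
  refine ⟨i, j, hij, fun k => ?_⟩
  by_cases hk : k = i
  · rw [if_pos hk, hk, hgi]
  · rw [if_neg hk]
    by_cases hk' : k = j
    · rw [if_pos hk', hk', hgj]
    · rw [if_neg hk']; exact hrest k hk hk'
/-! ### The coefficient functionals -/

def FR (n : ℕ) (k : Fin n) (x : Fin (n+1) → ℝ) : ℝ :=
  if (k : ℕ) = 0 then x 0
  else ((min (k : ℕ) 3 : ℕ) : ℝ) * x 0 + ∑ j : Fin n, (if (j : ℕ) < (k : ℕ) then x j.succ else 0)

lemma FR_root {n : ℕ} (hn : 3 ≤ n) (k j : Fin n) :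
    FR n k (root n j) = if j = k then 1 else 0 := by
  by_cases hk : (k : ℕ) = 0
  · rw [FR, if_pos hk, root_apply_zero]
    by_cases hj : (j : ℕ) = 0
    · rw [if_pos hj, if_pos (Fin.ext (by omega))]
    · rw [if_neg hj, if_neg (fun h => hj (by rw [h]; exact hk))]
  · rw [FR, if_neg hk]
    by_cases hj : (j : ℕ) = 0
    · rw [root_apply_zero, if_pos hj]
      have hsum : ∀ j' : Fin n, (if (j' : ℕ) < (k : ℕ) then root n j j'.succ else 0)
          = if (j' : ℕ) < min (k : ℕ) 3 then -1 else 0 := by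
        intro j'; rw [root_zero_succ j hj]
        split_ifs <;> first | rfl | (exfalso; first | assumption | omega) | norm_num
      rw [Finset.sum_congr rfl fun j' _ => hsum j',
        sum_indicator_lt (min (k : ℕ) 3) (by have := k.isLt; omega) (-1),
        if_neg (fun h : j = k => hk (h ▸ hj))]
      ring
    · rw [root_apply_zero, if_neg hj]
      have hlt1 : (j : ℕ) - 1 < n := by have := j.isLt; omega
      by_cases h1 : (j : ℕ) - 1 < (k : ℕ)
      · by_cases h2 : (j : ℕ) < (k : ℕ)
        · have hsum : ∀ j' : Fin n, (if (j' : ℕ) < (k : ℕ) then root n j j'.succ else 0)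
              = (if (j' : ℕ) = (j : ℕ) - 1 then 1 else 0)
                + (if (j' : ℕ) = (j : ℕ) then -1 else 0) := by
            intro j'; rw [root_pos_succ j hj]
            split_ifs <;> first | rfl | (exfalso; first | assumption | omega) | norm_num
          rw [Finset.sum_congr rfl fun j' _ => hsum j', Finset.sum_add_distrib,
            sum_indicator_eq _ hlt1 _, sum_indicator_eq _ j.isLt _,
            if_neg (fun h : j = k => by have := congrArg Fin.val h; omega)]
          ring
        · have hjk : j = k := Fin.ext (by omega)
          have hsum : ∀ j' : Fin n, (if (j' : ℕ) < (k : ℕ) then root n j j'.succ else 0)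
              = (if (j' : ℕ) = (j : ℕ) - 1 then 1 else 0) := by
            intro j'; rw [root_pos_succ j hj]
            split_ifs <;> first | rfl | (exfalso; first | assumption | omega) | norm_num
          rw [Finset.sum_congr rfl fun j' _ => hsum j', sum_indicator_eq _ hlt1 _,
            if_pos hjk]
          ring
      · have hsum : ∀ j' : Fin n, (if (j' : ℕ) < (k : ℕ) then root n j j'.succ else 0) = 0 := by
          intro j'; rw [root_pos_succ j hj]
          split_ifs <;> first | rfl | (exfalso; first | assumption | omega) | norm_num
        rw [Finset.sum_congr rfl fun j' _ => hsum j',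
          if_neg (fun h : j = k => by have := congrArg Fin.val h; omega)]
        simp

lemma FR_zero {n : ℕ} (k : Fin n) : FR n k 0 = 0 := by
  rw [FR]; split_ifs <;> simp

lemma FR_add {n : ℕ} (k : Fin n) (x y : Fin (n+1) → ℝ) :
    FR n k (x + y) = FR n k x + FR n k y := by
  rw [FR, FR, FR]
  split_ifs with h
  · rfl
  · have hsum : ∀ j : Fin n, (if (j : ℕ) < (k : ℕ) then (x + y) j.succ else 0)
        = (if (j : ℕ) < (k : ℕ) then x j.succ else 0)
          + (if (j : ℕ) < (k : ℕ) then y j.succ else 0) := by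
      intro j; split_ifs <;> simp
    rw [Finset.sum_congr rfl fun j _ => hsum j, Finset.sum_add_distrib]
    show _ * (x 0 + y 0) + _ = _
    ring

lemma FR_smul {n : ℕ} (k : Fin n) (a : ℝ) (x : Fin (n+1) → ℝ) :
    FR n k (a • x) = a * FR n k x := by
  rw [FR, FR]
  split_ifs with h
  · rfl
  · have hsum : ∀ j : Fin n, (if (j : ℕ) < (k : ℕ) then (a • x) j.succ else 0)
        = a * (if (j : ℕ) < (k : ℕ) then x j.succ else 0) := by
      intro j; split_ifs <;> simp
    rw [Finset.sum_congr rfl fun j _ => hsum j, ← Finset.mul_sum, Pi.smul_apply, smul_eq_mul]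
    ring

lemma FR_sum {n : ℕ} (k : Fin n) {ι : Type*} (s : Finset ι) (f : ι → Fin (n+1) → ℝ) :
    FR n k (∑ i ∈ s, f i) = ∑ i ∈ s, FR n k (f i) := by
  classical
  induction s using Finset.induction_on with
  | empty => simpa using FR_zero k
  | insert a s h ih =>
    rw [Finset.sum_insert h, FR_add, ih, Finset.sum_insert h]

lemma coord0 {n : ℕ} (h0n : 0 < n) (c : Fin n → ℝ) :
    (∑ i, c i • root n i) 0 = c ⟨0, h0n⟩ := by
  rw [Finset.sum_apply]
  have h : ∀ i : Fin n, (c i • root n i) 0 = if (i : ℕ) = 0 then c i else 0 := by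
    intro i
    rw [Pi.smul_apply, smul_eq_mul, root_apply_zero]
    split_ifs <;> ring
  rw [Finset.sum_congr rfl fun i _ => h i, sum_indicator_eq 0 h0n c]

/-! ### ip of reduced classes with roots -/

lemma ip_omega_root {n : ℕ} (hn : 3 ≤ n) (ω : Fin (n+1) → ℝ) (hred : IsReducedVec n ω)
    (i : Fin n) : 0 ≤ ip n ω (root n i) := by
  obtain ⟨hanti, hnn, hsum3⟩ := hred
  by_cases hi : (i : ℕ) = 0
  · rw [ip, root_apply_zero, if_pos hi]
    have h2 : ∀ j : Fin n, ω j.succ * root n i j.succ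
        = if (j : ℕ) < 3 then -(ω j.succ) else 0 := by
      intro j; rw [root_zero_succ i hi]; split_ifs <;> ring
    rw [Finset.sum_congr rfl fun j _ => h2 j]
    rw [Finset.sum_filter] at hsum3
    simp only [mcoord] at hsum3
    linarith
  · rw [ip, root_apply_zero, if_neg hi]
    have hlt : (i : ℕ) - 1 < n := by have := i.isLt; omega
    have h2 : ∀ j : Fin n, ω j.succ * root n i j.succ
        = (if (j : ℕ) = (i : ℕ) - 1 then ω j.succ else 0)
          + (if (j : ℕ) = (i : ℕ) then -(ω j.succ) else 0) := by
      intro j; rw [root_pos_succ i hi]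
      split_ifs <;> first | ring1 | (exfalso; omega)
    rw [Finset.sum_congr rfl fun j _ => h2 j, Finset.sum_add_distrib,
      sum_indicator_eq _ hlt _, sum_indicator_eq _ i.isLt _]
    have hle : (⟨(i : ℕ) - 1, hlt⟩ : Fin n) ≤ ⟨(i : ℕ), i.isLt⟩ := by
      simp only [Fin.mk_le_mk]; omega
    have hmono := hanti hle
    simp only [mcoord] at hmono
    rw [Fin.eta] at hmono
    linarith

/-- Lemma 2.17(i): every `D ∈ Γ_K` with `D·H > 0` is a nonnegative integer
combination of the simple roots `l_0, …, l_{n-1}`; every `D ∈ Γ_K` with `D·H = 0`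
equals `E_i - E_j` for some `i ≠ j`; and consequently every normalized reduced
class pairs nonnegatively with every `D ∈ Γ_K` having `D·H > 0`. -/
theorem gammaK_positive_roots
    (n : ℕ) (hn : 3 ≤ n) :
    (∀ D ∈ GammaK n, 0 < ip n D (Hc n) →
      ∃ c : Fin n → ℕ, D = ∑ i, (c i : ℝ) • root n i) ∧
    (∀ D ∈ GammaK n, ip n D (Hc n) = 0 →
      ∃ i j : Fin n, i ≠ j ∧ D = Ec n i - Ec n j) ∧
    (∀ ω : Fin (n + 1) → ℝ, ω 0 = 1 → IsReducedVec n ω →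
      ∀ D ∈ GammaK n, 0 < ip n D (Hc n) → 0 ≤ ip n ω D) := by
  have h0n : 0 < n := by omega
  have partA : ∀ D ∈ GammaK n, 0 < ip n D (Hc n) →
      ∃ c : Fin n → ℕ, D = ∑ i, (c i : ℝ) • root n i := by
    intro D hD hpos
    obtain ⟨L, rfl⟩ := gamma_word hD
    rw [rootE12_eq hn] at hpos ⊢
    rw [ip_Hc] at hpos
    rcases posOrNeg hn (wp n L) ⟨L, rfl⟩ ⟨1, by omega⟩ with hP | hN
    · obtain ⟨c, hc0, hc⟩ := hP
      have hck : ∀ k, c k = FR n k (wp n L (root n ⟨1, by omega⟩)) := by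
        intro k
        rw [hc, FR_sum]
        rw [Finset.sum_congr rfl fun i _ => FR_smul k (c i) (root n i)]
        rw [Finset.sum_congr rfl fun i (_ : i ∈ Finset.univ) => by rw [FR_root hn k i]]
        have h : ∀ i : Fin n, c i * (if i = k then (1:ℝ) else 0) = if i = k then c i else 0 := by
          intro i; split_ifs <;> ring
        rw [Finset.sum_congr rfl fun i _ => h i, Finset.sum_ite_eq' Finset.univ k c,
          if_pos (Finset.mem_univ k)]
      obtain ⟨z, hz⟩ := intV_wp L (intV_root (⟨1, by omega⟩ : Fin n))
      have hint : ∀ k : Fin n, ∃ m : ℤ, FR n k (wp n L (root n ⟨1, by omega⟩)) = (m : ℝ) := by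
        intro k
        rw [FR]
        split_ifs with hk
        · exact ⟨z 0, hz 0⟩
        · refine ⟨(min (k : ℕ) 3 : ℤ) * z 0
            + ∑ j : Fin n, (if (j : ℕ) < (k : ℕ) then z j.succ else 0), ?_⟩
          rw [Int.cast_add, Int.cast_mul, Int.cast_sum]
          rw [hz 0]
          congr 1
          · push_cast; ring
          · refine Finset.sum_congr rfl fun j _ => ?_
            split_ifs with h
            · exact hz j.succ
            · simp
      choose m hm using hint
      refine ⟨fun k => (m k).toNat, ?_⟩
      rw [hc]
      refine Finset.sum_congr rfl fun k _ => ?_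
      have h1 : c k = (m k : ℝ) := by rw [hck k, hm k]
      have h2 : 0 ≤ m k := by
        have h3 := hc0 k
        rw [h1] at h3
        exact_mod_cast h3
      rw [h1]
      congr 1
      exact_mod_cast (Int.toNat_of_nonneg h2).symm
    · exfalso
      obtain ⟨c, hc0, hc⟩ := hN
      have h1 : (-(wp n L (root n (⟨1, by omega⟩ : Fin n)))) 0 = c ⟨0, h0n⟩ := by
        rw [hc]; exact coord0 h0n c
      rw [Pi.neg_apply] at h1
      have h2 := hc0 ⟨0, h0n⟩
      linarith
  refine ⟨partA, ?_, ?_⟩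
  · -- part B
    intro D hD hzero
    obtain ⟨L, rfl⟩ := gamma_word hD
    obtain ⟨z, hz⟩ := intV_wp L (rootE12_int hn)
    have hself : ip n (wp n L (rootE12 n)) (wp n L (rootE12 n)) = -2 := by
      rw [ip_wp_self hn]; exact rootE12_self hn
    have hK : ip n (wp n L (rootE12 n)) (Kc n) = 0 := by
      rw [ip_wp_K hn]; exact rootE12_K hn
    rw [ip_Hc] at hzero
    have hz0 : z 0 = 0 := by
      have h := hz 0
      rw [hzero] at h
      exact_mod_cast h.symm
    have hsq : ∑ k : Fin n, z k.succ * z k.succ = 2 := by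
      have e : ip n (wp n L (rootE12 n)) (wp n L (rootE12 n))
          = ((z 0 * z 0 - ∑ k : Fin n, z k.succ * z k.succ : ℤ) : ℝ) := by
        rw [ip]
        push_cast
        rw [hz 0]
        congr 1
        exact Finset.sum_congr rfl fun k _ => by rw [hz k.succ]
      rw [e] at hself
      have h4 : (z 0 * z 0 - ∑ k : Fin n, z k.succ * z k.succ : ℤ) = -2 := by
        exact_mod_cast hself
      rw [hz0] at h4
      omega
    have hlin : ∑ k : Fin n, z k.succ = 0 := by
      have e : ip n (wp n L (rootE12 n)) (Kc n)
          = ((z 0 * (-3) - ∑ k : Fin n, z k.succ : ℤ) : ℝ) := by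
        rw [ip, Kc_zero]
        push_cast
        rw [hz 0]
        congr 1
        exact Finset.sum_congr rfl fun k _ => by rw [Kc_succ, mul_one, hz k.succ]
      rw [e] at hK
      have h4 : (z 0 * (-3) - ∑ k : Fin n, z k.succ : ℤ) = 0 := by exact_mod_cast hK
      rw [hz0] at h4
      omega
    obtain ⟨i, j, hij, hg⟩ := sum2_classify (fun k => z k.succ) hsq hlin
    refine ⟨i, j, hij, ?_⟩
    funext p
    induction p using Fin.cases with
    | zero =>
      rw [Pi.sub_apply, hz 0, hz0]
      have hi0 : Ec n i 0 = 0 := by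
        rw [Ec, if_neg (fun h => (Fin.succ_ne_zero i) h.symm)]
      have hj0 : Ec n j 0 = 0 := by
        rw [Ec, if_neg (fun h => (Fin.succ_ne_zero j) h.symm)]
      rw [hi0, hj0]
      norm_num
    | succ q =>
      rw [Pi.sub_apply, hz q.succ, hg q]
      rw [Ec, Ec]
      simp only [Fin.succ_inj]
      by_cases hqi : q = i
      · have hqj : ¬ q = j := fun h => hij (hqi.symm.trans h)
        rw [if_pos hqi, if_pos hqi, if_neg hqj]
        norm_num
      · rw [if_neg hqi, if_neg hqi]
        by_cases hqj : q = j
        · rw [if_pos hqj, if_pos hqj]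
          norm_num
        · rw [if_neg hqj, if_neg hqj]
          norm_num
  · -- part C
    intro ω hω0 hred D hD hpos
    obtain ⟨c, hc⟩ := partA D hD hpos
    rw [hc, ip_sum_right]
    refine Finset.sum_nonneg fun i _ => ?_
    rw [ip_smul_right]
    exact mul_nonneg (by positivity) (ip_omega_root hn ω hred i)
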